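/- For any real polynomial s of degree at most k and any L > 0, the maximum over η in [0, L] of η·(s(η)·η + 1)^2 is at least L/(2k+3)^2. -/

import Mathlib

open Polynomial Polynomial.Chebyshev Real

private lemma chebyshev_T_natDegree_le : ∀ n : ℕ, (T ℝ (n : ℤ)).natDegree ≤ n ∧
    (T ℝ ((n : ℤ) + 1)).natDegree ≤ n + 1 := by
  intro n
  induction n with
  | zero => constructor <;> simp [T_zero, T_one]
  | succ n ih =>
    obtain ⟨h1, h2⟩ := ih
    have key : (T ℝ ((n : ℤ) + 2)).natDegree ≤ n + 2 := by
      rw [T_add_two]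
      refine le_trans (natDegree_sub_le _ _) (max_le ?_ (h1.trans (by omega)))
      calc (2 * X * T ℝ ((n : ℤ) + 1)).natDegree
          ≤ (2 * X : ℝ[X]).natDegree + (T ℝ ((n : ℤ) + 1)).natDegree := natDegree_mul_le
        _ ≤ 1 + (n + 1) := by
            gcongr
            calc (2 * X : ℝ[X]).natDegree ≤ (2 : ℝ[X]).natDegree + (X : ℝ[X]).natDegree :=
              natDegree_mul_le
            _ ≤ 1 := by simp
        _ = n + 2 := by ring
    constructor
    · convert h2 using 2 <;> push_cast <;> ring
    · convert key using 2 <;> push_cast <;> ring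

private lemma chebyshev_U_eval_zero : ∀ m : ℕ, (U ℝ (2 * (m : ℤ))).eval 0 = (-1 : ℝ) ^ m := by
  intro m
  induction m with
  | zero => simp [U_zero]
  | succ m ih =>
    have h := U_add_two ℝ (2 * (m : ℤ))
    have e : (2 * ((m : ℤ) + 1)) = 2 * (m : ℤ) + 2 := by ring
    have := congrArg (Polynomial.eval (0 : ℝ)) h
    simp only [eval_sub, eval_mul, eval_ofNat, eval_X, mul_zero, zero_mul] at this
    rw [show ((m : ℕ) + 1 : ℕ) = m + 1 from rfl]
    push_cast
    rw [e, this, ih]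
    ring

private lemma chebyshev_T_odd_eval_zero : ∀ m : ℕ, (T ℝ (2 * (m : ℤ) + 1)).eval 0 = 0 := by
  intro m
  induction m with
  | zero => simp [T_one]
  | succ m ih =>
    have h := T_add_two ℝ (2 * (m : ℤ) + 1)
    have := congrArg (Polynomial.eval (0 : ℝ)) h
    simp only [eval_sub, eval_mul, eval_ofNat, eval_X, mul_zero, zero_mul] at this
    have e : (2 * ((m : ℤ) + 1) + 1) = 2 * (m : ℤ) + 1 + 2 := by ring
    push_cast
    rw [e, this, ih]
    ring

set_option maxHeartbeats 2000000 in
theorem stmt_1 (k : ℕ) (s : Polynomial ℝ) (hs : s.natDegree ≤ k) (L : ℝ) (hL : 0 < L) :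
    ∃ η ∈ Set.Icc (0 : ℝ) L,
      η * (s.eval η * η + 1) ^ 2 ≥ L / (2 * (k : ℝ) + 3) ^ 2 := by
  by_contra hcon
  push_neg at hcon
  set N : ℕ := 2 * k + 3 with hN
  have hNr : ((N : ℝ)) = 2 * (k : ℝ) + 3 := by push_cast [hN]; ring
  have hNpos : (0 : ℝ) < N := by rw [hNr]; positivity
  -- the polynomial p with p(η) = s(η)·η + 1
  set p : ℝ[X] := s * X + 1 with hp
  have hpe : ∀ η : ℝ, p.eval η = s.eval η * η + 1 := by intro η; simp [hp]
  have hpd : p.natDegree ≤ k + 1 := by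
    refine le_trans (natDegree_add_le _ _) (max_le ?_ (by simp))
    exact le_trans natDegree_mul_le (by simp only [natDegree_X]; omega)
  -- q(x) = x * p(L x²)
  set q : ℝ[X] := X * p.comp (C L * X ^ 2) with hqdef
  have hqe : ∀ x : ℝ, q.eval x = x * p.eval (L * x ^ 2) := by
    intro x; simp [hqdef, eval_comp]
  have hqd : q.natDegree ≤ N := by
    calc q.natDegree ≤ (X : ℝ[X]).natDegree + (p.comp (C L * X ^ 2)).natDegree :=
          natDegree_mul_le
      _ ≤ 1 + p.natDegree * (C L * X ^ 2).natDegree := by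
          gcongr
          · simp
          · exact natDegree_comp_le
      _ ≤ 1 + (k + 1) * 2 := by
          gcongr
          refine le_trans natDegree_mul_le ?_
          simp
      _ ≤ N := by omega
  -- |q(x)| < 1/N on [-1,1]
  have hq : ∀ x : ℝ, |x| ≤ 1 → |q.eval x| < 1 / N := by
    intro x hx
    have hx2 : x ^ 2 ≤ 1 := by nlinarith [abs_nonneg x, sq_abs x]
    have hmem : L * x ^ 2 ∈ Set.Icc (0 : ℝ) L := by
      constructor
      · positivity
      · nlinarith
    have h1 := hcon (L * x ^ 2) hmem
    rw [← hpe, ← hNr] at h1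
    have h2 : (q.eval x) ^ 2 < (1 / N) ^ 2 := by
      rw [hqe]
      have : (x * p.eval (L * x ^ 2)) ^ 2 = (L * x ^ 2) * (p.eval (L * x ^ 2)) ^ 2 / L := by
        field_simp
      rw [this, div_pow, one_pow]
      rw [div_lt_div_iff₀ hL (by positivity)]
      have h3 := mul_lt_mul_of_pos_right h1 (show (0:ℝ) < (N:ℝ) ^ 2 by positivity)
      have h4 : L / (N:ℝ) ^ 2 * (N:ℝ) ^ 2 = L := by field_simp
      nlinarith
    nlinarith [abs_nonneg (q.eval x), sq_abs (q.eval x), one_div_pos.mpr hNpos]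
  -- the comparison polynomial F
  set ε : ℝ := (-1) ^ (k + 1) with hε
  have hε2 : ε * ε = 1 := by
    rw [hε, ← pow_add]
    exact Even.neg_one_pow ⟨k + 1, by ring⟩
  set F : ℝ[X] := C (ε / N) * T ℝ (N : ℤ) - q with hF
  have hFd : F.natDegree ≤ N := by
    refine le_trans (natDegree_sub_le _ _) (max_le ?_ hqd)
    exact le_trans (natDegree_C_mul_le _ _) (chebyshev_T_natDegree_le N).1
  -- extrema points
  set x : ℕ → ℝ := fun j => Real.cos (j * π / N) with hx
  have hTx : ∀ j : ℕ, (T ℝ (N : ℤ)).eval (x j) = (-1 : ℝ) ^ j := by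
    intro j
    have := T_real_cos ((j : ℝ) * π / N) (N : ℤ)
    rw [hx]
    simp only at this ⊢
    rw [this]
    have : ((N : ℤ) : ℝ) * ((j : ℝ) * π / N) = (j : ℝ) * π := by
      field_simp
      push_cast; ring
    rw [this]
    have := Real.cos_nat_mul_pi_sub 0 j
    simpa using this
  have hFx : ∀ j : ℕ, 0 < (-1 : ℝ) ^ (k + 1 + j) * F.eval (x j) := by
    intro j
    have hqx : |q.eval (x j)| < 1 / N := hq _ (abs_cos_le_one _)
    have hFe : F.eval (x j) = ε / N * (-1) ^ j - q.eval (x j) := by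
      simp [hF, hTx j]
    have e1 : (-1 : ℝ) ^ (k + 1 + j) * (ε / N * (-1) ^ j) = 1 / N := by
      rw [pow_add, hε]
      have : (-1 : ℝ) ^ (k+1) * (-1) ^ (k+1) = 1 := by
        rw [← pow_add]; exact Even.neg_one_pow ⟨k + 1, by ring⟩
      have h2 : (-1 : ℝ) ^ j * (-1) ^ j = 1 := by
        rw [← pow_add]; exact Even.neg_one_pow ⟨j, by ring⟩
      field_simp
      nlinarith [this, h2]
    have e2 : (-1 : ℝ) ^ (k + 1 + j) * q.eval (x j) ≤ |q.eval (x j)| := by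
      rcases Nat.even_or_odd (k + 1 + j) with h | h
      · rw [h.neg_one_pow, one_mul]; exact le_abs_self _
      · rw [h.neg_one_pow, neg_one_mul]; exact neg_le_abs _
    rw [hFe, mul_sub, e1]
    linarith
  -- monotonicity of extrema points
  have hπ := Real.pi_pos
  have hmemIcc : ∀ j : ℕ, j ≤ N → (j : ℝ) * π / N ∈ Set.Icc 0 π := by
    intro j hj
    have hjr : (j : ℝ) ≤ N := by exact_mod_cast hj
    constructor
    · positivity
    · rw [div_le_iff₀ hNpos]
      nlinarith
  have hmono : ∀ i j : ℕ, i < j → j ≤ N → x j < x i := by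
    intro i j hij hj
    have hij' : (i : ℝ) < j := by exact_mod_cast hij
    exact Real.strictAntiOn_cos (hmemIcc i (by omega)) (hmemIcc j hj) (by gcongr)
  have hmono' : ∀ i j : ℕ, i ≤ j → j ≤ N → x j ≤ x i := by
    intro i j hij hj
    rcases eq_or_lt_of_le hij with rfl | h
    · exact le_refl _
    · exact (hmono i j h hj).le
  -- roots between consecutive extrema via IVT
  have hcont : Continuous fun t : ℝ => F.eval t := F.continuous
  have hroot : ∀ j : ℕ, ∃ z : ℝ, j < N → z ∈ Set.Ioo (x (j+1)) (x j) ∧ F.eval z = 0 := by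
    intro j
    by_cases hj : j < N
    · have hlt : x (j+1) < x j := hmono j (j+1) (by omega) (by omega)
      have h1 := hFx j
      have h2 := hFx (j+1)
      have hsucc : k + 1 + (j+1) = (k + 1 + j) + 1 := by omega
      rw [hsucc, pow_succ] at h2
      rcases Nat.even_or_odd (k + 1 + j) with he | ho
      · rw [he.neg_one_pow, one_mul] at h1
        rw [he.neg_one_pow, one_mul, neg_one_mul] at h2
        have h2' : F.eval (x (j+1)) < 0 := by linarith
        obtain ⟨zz, hzz, hzz0⟩ := intermediate_value_Ioo hlt.le hcont.continuousOn
          (Set.mem_Ioo.mpr ⟨h2', h1⟩)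
        exact ⟨zz, fun _ => ⟨hzz, hzz0⟩⟩
      · rw [ho.neg_one_pow, neg_one_mul] at h1
        rw [ho.neg_one_pow, neg_one_mul, neg_neg, one_mul] at h2
        have h1' : F.eval (x j) < 0 := by linarith
        obtain ⟨zz, hzz, hzz0⟩ := intermediate_value_Ioo' hlt.le hcont.continuousOn
          (Set.mem_Ioo.mpr ⟨h1', h2⟩)
        exact ⟨zz, fun _ => ⟨hzz, hzz0⟩⟩
    · exact ⟨0, fun h => absurd h hj⟩
  choose z hz using hroot
  -- F is divisible by X^2
  have hT0 : (T ℝ (N : ℤ)).eval 0 = 0 := by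
    have := chebyshev_T_odd_eval_zero (k+1)
    have e : (2 * ((k:ℤ)+1) + 1) = ((N : ℕ) : ℤ) := by push_cast [hN]; ring
    rwa [show ((k+1 : ℕ) : ℤ) = (k : ℤ) + 1 by push_cast; ring, e] at this
  have hdvd : (X : ℝ[X]) ^ 2 ∣ F := by
    rw [Polynomial.X_pow_dvd_iff]
    intro d hd
    interval_cases d
    · rw [Polynomial.coeff_zero_eq_eval_zero]
      have hq0 : q.eval 0 = 0 := by rw [hqe]; ring
      simp [hF, hT0, hq0]
    · have h1 : F.coeff 1 = (derivative F).eval 0 := by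
        rw [← Polynomial.coeff_zero_eq_eval_zero, Polynomial.coeff_derivative]
        push_cast; ring
      have hdT : derivative (T ℝ (N : ℤ)) = ((N : ℤ) : ℝ[X]) * U ℝ ((N : ℤ) - 1) :=
        T_derivative_eq_U (N : ℤ)
      have hU0 : (U ℝ ((N : ℤ) - 1)).eval 0 = ε := by
        have := chebyshev_U_eval_zero (k+1)
        have e : (2 * ((k+1 : ℕ) : ℤ)) = ((N : ℕ) : ℤ) - 1 := by push_cast [hN]; ring
        rw [e] at this
        rw [this, hε]
      have hdq : (derivative q).eval 0 = 1 := by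
        rw [hqdef, derivative_mul]
        have hc0 : (C L * X ^ 2 : ℝ[X]).eval 0 = 0 := by simp
        simp [eval_comp, hc0, hpe]
      rw [h1, hF, derivative_sub, derivative_C_mul, hdT]
      have hNne : ((N : ℝ)) ≠ 0 := ne_of_gt hNpos
      simp only [eval_sub, eval_mul, eval_C, hdq, eval_intCast, Int.cast_natCast, hU0]
      simp only [Polynomial.eval_intCast, Polynomial.eval_natCast, Int.cast_natCast]
      field_simp
      nlinarith [hε2]
  obtain ⟨G, hG⟩ := hdvd
  have hFne : F ≠ 0 := by
    intro h0
    have := hFx 0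
    rw [h0] at this
    simp at this
  have hGne : G ≠ 0 := by
    rintro rfl
    rw [mul_zero] at hG
    exact hFne hG
  have hGd : G.natDegree ≤ 2 * k + 1 := by
    have hX2 : ((X : ℝ[X]) ^ 2) ≠ 0 := pow_ne_zero _ X_ne_zero
    have : F.natDegree = 2 + G.natDegree := by
      rw [hG, natDegree_mul hX2 hGne, natDegree_X_pow]
    omega
  -- the middle extrema straddle zero
  have hck1 : (((k+1 : ℕ)) : ℝ) = (k : ℝ) + 1 := by push_cast; ring
  have hck2 : (((k+2 : ℕ)) : ℝ) = (k : ℝ) + 2 := by push_cast; ring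
  have hxk1 : 0 < x (k+1) := by
    apply Real.cos_pos_of_mem_Ioo
    refine Set.mem_Ioo.mpr ⟨?_, ?_⟩
    · have h0 : (0:ℝ) ≤ ((k+1 : ℕ) : ℝ) * π / N := by positivity
      nlinarith
    · rw [div_lt_iff₀ hNpos, hNr, hck1]
      nlinarith
  have hxk2 : x (k+2) < 0 := by
    apply Real.cos_neg_of_pi_div_two_lt_of_lt
    · rw [lt_div_iff₀ hNpos, hNr, hck2]
      nlinarith
    · have := (hmemIcc (k+2) (by omega)).2
      nlinarith
  -- nonzero distinct roots of G
  set J : Finset ℕ := (Finset.range N).erase (k+1) with hJ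
  have hk1mem : k + 1 ∈ Finset.range N := Finset.mem_range.mpr (by omega)
  have hJcard : J.card = 2 * k + 2 := by
    rw [hJ, Finset.card_erase_of_mem hk1mem, Finset.card_range]
    omega
  have hzJ : ∀ j ∈ J, z j ≠ 0 ∧ G.eval (z j) = 0 := by
    intro j hj
    have hjN : j < N := Finset.mem_range.mp (Finset.mem_of_mem_erase hj)
    have hjne : j ≠ k+1 := Finset.ne_of_mem_erase hj
    obtain ⟨hzmem, hzval⟩ := hz j hjN
    have hzne : z j ≠ 0 := by
      by_cases hjk : j ≤ k
      · have hle : x (k+1) ≤ x (j+1) := hmono' (j+1) (k+1) (by omega) (by omega)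
        have := hzmem.1
        exact ne_of_gt (by linarith)
      · have hjk2 : k + 2 ≤ j := by omega
        have hle : x j ≤ x (k+2) := hmono' (k+2) j (by omega) (by omega)
        have := hzmem.2
        exact ne_of_lt (by linarith)
    refine ⟨hzne, ?_⟩
    have hFz : F.eval (z j) = (z j) ^ 2 * G.eval (z j) := by rw [hG]; simp
    rw [hzval] at hFz
    rcases mul_eq_zero.mp hFz.symm with h | h
    · exact absurd (pow_eq_zero_iff (by norm_num) |>.mp h) hzne
    · exact h
  have hchain : ∀ i j : ℕ, i < j → j < N → z j < z i := by
    intro i j hij hjN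
    have h1 := (hz j hjN).1.2
    have h2 := (hz i (by omega)).1.1
    have h3 : x j ≤ x (i+1) := hmono' (i+1) j (by omega) (by omega)
    linarith
  have hinj : Set.InjOn z J := by
    intro i hi j hj hij
    by_contra hne
    have hiN : i < N := Finset.mem_range.mp (Finset.mem_of_mem_erase hi)
    have hjN : j < N := Finset.mem_range.mp (Finset.mem_of_mem_erase hj)
    rcases lt_or_gt_of_ne hne with h | h
    · exact absurd hij (ne_of_gt (hchain i j h hjN))
    · exact absurd hij (ne_of_lt (hchain j i h hiN))
  have hcard : (J.image z).card = 2 * k + 2 := by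
    rw [Finset.card_image_of_injOn hinj, hJcard]
  have hsub : (J.image z).val ≤ G.roots := by
    rw [Multiset.le_iff_subset (J.image z).nodup]
    intro a ha
    obtain ⟨j, hj, rfl⟩ := Finset.mem_image.mp (Finset.mem_val.mp ha)
    rw [Polynomial.mem_roots hGne]
    exact (hzJ j hj).2
  have hle := Multiset.card_le_card hsub
  have hGr := Polynomial.card_roots' G
  rw [Finset.card_val, hcard] at hle
  omega
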